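/- Let X be an isotropic L-space, (T,r) a metric space, ω a modulus of continuity, f ∈ H^ω(T,ℝ), and x ∈ X a convex invertible element with h_X(x,θ) ≤ 1 and inverse x'. Then the function f_x(t) := f_+(t)·x + f_−(t)·x' belongs to H^ω(T,X), i.e., h_X(f_x(t), f_x(s)) ≤ ω(r(t,s)) for all t,s ∈ T. -/
import Mathlib


structure LSpace (X : Type*) where
  add : X → X → X
  smul : ℝ → X → X
  theta : X
  h : X → X → ℝ
  add_comm : ∀ x y, add x y = add y x
  add_assoc : ∀ x y z, add x (add y z) = add (add x y) z
  add_theta : ∀ x, add x theta = x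
  smul_add : ∀ (a : ℝ) x y, smul a (add x y) = add (smul a x) (smul a y)
  smul_smul : ∀ (a b : ℝ) x, smul a (smul b x) = smul (a * b) x
  one_smul : ∀ x, smul 1 x = x
  zero_smul : ∀ x, smul 0 x = theta
  h_self : ∀ x, h x x = 0
  h_comm : ∀ x y, h x y = h y x
  h_triangle : ∀ x y z, h x z ≤ h x y + h y z
  h_eq_zero : ∀ x y, h x y = 0 → x = y
  h_smul : ∀ (a : ℝ) x y, h (smul a x) (smul a y) = |a| * h x y
  h_add_le : ∀ x y z, h (add x z) (add y z) ≤ h x y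


/-- `ω` is a modulus of continuity: non-decreasing, continuous, subadditive,
and vanishing at `0`. -/
def IsModulus (ω : ℝ → ℝ) : Prop :=
  ω 0 = 0 ∧ (∀ a b : ℝ, 0 ≤ a → a ≤ b → ω a ≤ ω b) ∧
    ContinuousOn ω (Set.Ici 0) ∧
    ∀ a b : ℝ, 0 ≤ a → 0 ≤ b → ω (a + b) ≤ ω a + ω b

/-- If `X` is an isotropic L-space, `f ∈ H^ω(T,ℝ)`, and `x` is a convex invertible
element with `h(x,θ) ≤ 1` and inverse `x'`, then
`f_x(t) = f₊(t)·x + f₋(t)·x'` belongs to `H^ω(T,X)`. -/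
theorem fx_mem_Homega {X T : Type*} [MetricSpace T] (L : LSpace X)
    (hiso : ∀ x y z : X, L.h (L.add x z) (L.add y z) = L.h x y)
    (ω : ℝ → ℝ) (hω : IsModulus ω)
    (f : T → ℝ) (hf : ∀ t s : T, |f t - f s| ≤ ω (dist t s))
    (x x' : X)
    (hconv : ∀ a b : ℝ, 0 ≤ a → 0 ≤ b → L.smul (a + b) x = L.add (L.smul a x) (L.smul b x))
    (hinv : L.add x x' = L.theta) (hx1 : L.h x L.theta ≤ 1) :
    ∀ t s : T,
      L.h (L.add (L.smul (max (f t) 0) x) (L.smul (max (-f t) 0) x'))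
          (L.add (L.smul (max (f s) 0) x) (L.smul (max (-f s) 0) x'))
        ≤ ω (dist t s) := by
  have hnn : ∀ u v : X, 0 ≤ L.h u v := by
    intro u v
    nlinarith [L.h_triangle u v u, L.h_self u, L.h_comm u v]
  have hsθ : ∀ c : ℝ, L.smul c L.theta = L.theta := by
    intro c
    have hyy : L.add (L.smul c L.theta) (L.smul c L.theta) = L.smul c L.theta := by
      rw [← L.smul_add, L.add_theta]
    apply L.h_eq_zero
    have h2 := hiso (L.smul c L.theta) L.theta (L.smul c L.theta)
    rw [hyy, L.add_comm L.theta, L.add_theta] at h2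
    rw [← h2, L.h_self]
  have hsmulθ : ∀ c : ℝ, L.h (L.smul c x) L.theta = |c| * L.h x L.theta := by
    intro c
    conv_lhs => rw [← hsθ c]
    exact L.h_smul c x L.theta
  have hxx' : ∀ c : ℝ, L.add (L.smul c x') (L.smul c x) = L.theta := by
    intro c
    rw [← L.smul_add, L.add_comm x', hinv, hsθ]
  have Fpos : ∀ a : ℝ, 0 ≤ a →
      L.add (L.smul (max a 0) x) (L.smul (max (-a) 0) x') = L.smul a x := by
    intro a ha
    rw [max_eq_left ha, max_eq_right (by linarith : -a ≤ 0), L.zero_smul, L.add_theta]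
  have Fneg : ∀ a : ℝ, a ≤ 0 →
      L.add (L.smul (max a 0) x) (L.smul (max (-a) 0) x') = L.smul (-a) x' := by
    intro a ha
    rw [max_eq_right ha, max_eq_left (by linarith : 0 ≤ -a), L.zero_smul,
      L.add_comm, L.add_theta]
  have key : ∀ a b : ℝ, b ≤ a →
      L.h (L.add (L.smul (max a 0) x) (L.smul (max (-a) 0) x'))
        (L.add (L.smul (max b 0) x) (L.smul (max (-b) 0) x'))
        = (a - b) * L.h x L.theta := by
    intro a b hba
    rcases le_total 0 b with hb | hb
    · rw [Fpos a (le_trans hb hba), Fpos b hb]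
      have hsplit : L.smul a x = L.add (L.smul (a - b) x) (L.smul b x) := by
        rw [← hconv (a - b) b (by linarith) hb, sub_add_cancel]
      rw [hsplit]
      have h2 := hiso (L.smul (a - b) x) L.theta (L.smul b x)
      rw [L.add_comm L.theta, L.add_theta] at h2
      rw [h2, hsmulθ, abs_of_nonneg (by linarith : (0:ℝ) ≤ a - b)]
    · rcases le_total 0 a with ha | ha
      · rw [Fpos a ha, Fneg b hb]
        have h2 := hiso (L.smul a x) (L.smul (-b) x') (L.smul (-b) x)
        rw [← hconv a (-b) ha (by linarith), hxx'] at h2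
        have hab : a + -b = a - b := by ring
        rw [hab] at h2
        rw [← h2, hsmulθ, abs_of_nonneg (by linarith : (0:ℝ) ≤ a - b)]
      · rw [Fneg a ha, Fneg b hb]
        have h2 := hiso (L.smul (-a) x') (L.smul (-b) x') (L.smul (-b) x)
        rw [hxx'] at h2
        have hsplit : L.smul (-b) x = L.add (L.smul (-a) x) (L.smul (a - b) x) := by
          rw [show (-b : ℝ) = -a + (a - b) by ring,
            hconv (-a) (a - b) (by linarith) (by linarith)]
        rw [hsplit, L.add_assoc, hxx', L.add_comm L.theta, L.add_theta] at h2
        rw [← h2, hsmulθ, abs_of_nonneg (by linarith : (0:ℝ) ≤ a - b)]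
  intro t s
  rcases le_total (f s) (f t) with h1 | h1
  · rw [key (f t) (f s) h1]
    have hle : f t - f s ≤ ω (dist t s) := le_trans (le_abs_self _) (hf t s)
    nlinarith [hnn x L.theta, sub_nonneg.2 h1]
  · rw [L.h_comm, key (f s) (f t) h1]
    have hle : f s - f t ≤ ω (dist t s) := by
      have := hf s t
      rw [dist_comm] at this
      exact le_trans (le_abs_self _) this
    nlinarith [hnn x L.theta, sub_nonneg.2 h1]
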